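/- Assume ZF. Let ν be a countably complete nonprincipal ultrafilter on ω₁, let (Γ_α : α < ω₁) be an increasing family of sets with union Γ, and for each α < ω₁ let μ_α be a fine countably complete ultrafilter on the countable subsets of Γ_α. Define μ* on subsets A of 𝒫_{ω₁}(Γ) by: A ∈ μ* iff for ν-almost every α, {σ ∈ A : σ ⊆ Γ_α} ∈ μ_α. Then μ* is a fine, countably complete ultrafilter on 𝒫_{ω₁}(Γ). -/

import Mathlib

/-- The collection of countable subsets of `X` (the set `𝒫_{ω₁}(X)`). -/
abbrev CSub (X : Type*) := {σ : Set X // σ.Countable}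

/-- An ultrafilter on `𝒫_{ω₁}(X)` is *fine* if it contains `{σ : x ∈ σ}` for every `x ∈ X`. -/
def IsFine {X : Type*} (μ : Ultrafilter (CSub X)) : Prop :=
  ∀ x : X, {σ : CSub X | x ∈ σ.1} ∈ μ

/-- An ultrafilter is *countably complete* if it is closed under countable intersections. -/
def IsCountablyComplete {α : Type*} (μ : Ultrafilter α) : Prop :=
  ∀ A : ℕ → Set α, (∀ n, A n ∈ μ) → (⋂ n, A n) ∈ μ

/-- `ω₁`, realized as the type of ordinals below `(aleph 1).ord`. -/
abbrev Omega1 := {o : Ordinal // o < (Cardinal.aleph 1).ord}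

/-- The set of points of `Omega1` below a fixed `α₀` is countable. -/
lemma countable_lt (α₀ : Omega1) : ({β : Omega1 | β < α₀} : Set Omega1).Countable := by
  rw [Cardinal.countable_iff_lt_aleph_one]
  have h1 : Cardinal.mk ({β : Omega1 | β < α₀} : Set Omega1) ≤ Cardinal.mk (Set.Iio α₀.1) := by
    refine Cardinal.mk_le_of_injective (f := fun β => ⟨β.1.1, β.2⟩) ?_
    intro a b hab
    simp only [Subtype.mk.injEq] at hab
    exact Subtype.ext (Subtype.ext (by have h := congrArg Subtype.val hab; exact h))
  have h2 := Ordinal.mk_Iio_ordinal α₀.1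
  have h3 : α₀.1.card < Cardinal.aleph 1 := Cardinal.lt_ord.mp α₀.2
  refine lt_of_le_of_lt h1 ?_
  rw [h2]
  exact Cardinal.lift_lt_aleph_one.mpr h3

/-- Tail sets belong to a countably complete nonprincipal ultrafilter on `ω₁`. -/
lemma tail_mem (ν : Ultrafilter Omega1) (hνcc : IsCountablyComplete ν)
    (hνnp : ∀ α : Omega1, ({α}ᶜ : Set Omega1) ∈ ν) (α₀ : Omega1) :
    {β : Omega1 | α₀ ≤ β} ∈ ν := by
  have hcnt := countable_lt α₀
  rcases Set.eq_empty_or_nonempty ({β : Omega1 | β < α₀} : Set Omega1) with he | hne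
  · have : {β : Omega1 | α₀ ≤ β} = Set.univ := by
      ext β; simp only [Set.mem_setOf_eq, Set.mem_univ, iff_true]
      by_contra h
      exact absurd (Set.eq_empty_iff_forall_notMem.mp he β) (by simp [lt_of_not_ge h])
    rw [this]; exact Filter.univ_mem
  · obtain ⟨f, hf⟩ := hcnt.exists_eq_range hne
    have key : (⋂ n, ({f n}ᶜ : Set Omega1)) = {β : Omega1 | α₀ ≤ β} := by
      ext β
      simp only [Set.mem_iInter, Set.mem_compl_iff, Set.mem_singleton_iff, Set.mem_setOf_eq]
      constructor
      · intro h
        by_contra hβ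
        have : β ∈ Set.range f := hf ▸ (show β ∈ {γ : Omega1 | γ < α₀} from lt_of_not_ge hβ)
        obtain ⟨n, hn⟩ := this
        exact h n hn.symm
      · intro h n hn
        have : f n ∈ ({γ : Omega1 | γ < α₀} : Set Omega1) := hf ▸ Set.mem_range_self n
        rw [← hn] at this
        exact absurd this (not_lt_of_ge h)
    rw [← key]
    exact hνcc _ (fun n => hνnp (f n))

theorem stmt6 {Γ : Type*}
    (ν : Ultrafilter Omega1) (hνcc : IsCountablyComplete ν)
    (hνnp : ∀ α : Omega1, ({α}ᶜ : Set Omega1) ∈ ν)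
    (G : Omega1 → Set Γ)
    (hmono : ∀ α β : Omega1, α ≤ β → G α ⊆ G β)
    (hunion : ∀ x : Γ, ∃ α, x ∈ G α)
    (hcover : ∀ σ : Set Γ, σ.Countable → ∃ α, σ ⊆ G α)
    (μ : Omega1 → Ultrafilter (CSub Γ))
    (hconc : ∀ α, {σ : CSub Γ | σ.1 ⊆ G α} ∈ μ α)
    (hfine : ∀ α, ∀ x ∈ G α, {σ : CSub Γ | x ∈ σ.1} ∈ μ α)
    (hcc : ∀ α, IsCountablyComplete (μ α)) :
    ∃ μs : Ultrafilter (CSub Γ),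
      (∀ A : Set (CSub Γ),
          A ∈ μs ↔ {α : Omega1 | {σ : CSub Γ | σ ∈ A ∧ σ.1 ⊆ G α} ∈ μ α} ∈ ν) ∧
        IsFine μs ∧ IsCountablyComplete μs := by
  refine ⟨Ultrafilter.bind ν μ, ?_, ?_, ?_⟩
  · -- defining property
    intro A
    have hmem : A ∈ Ultrafilter.bind ν μ ↔ {α : Omega1 | A ∈ μ α} ∈ ν := Iff.rfl
    rw [hmem]
    have hkey : ∀ α : Omega1, ({σ : CSub Γ | σ ∈ A ∧ σ.1 ⊆ G α} ∈ μ α ↔ A ∈ μ α) := by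
      intro α
      constructor
      · intro h
        exact Filter.mem_of_superset h (fun σ hσ => hσ.1)
      · intro h
        exact Filter.inter_mem h (hconc α)
    constructor
    · intro h
      exact Filter.mem_of_superset h (fun α hα => (hkey α).mpr hα)
    · intro h
      exact Filter.mem_of_superset h (fun α hα => (hkey α).mp hα)
  · -- fine
    intro x
    obtain ⟨α₀, hα₀⟩ := hunion x
    have htail := tail_mem ν hνcc hνnp α₀
    show {α : Omega1 | {σ : CSub Γ | x ∈ σ.1} ∈ μ α} ∈ ν
    exact Filter.mem_of_superset htail
      (fun β hβ => hfine β x (hmono α₀ β hβ hα₀))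
  · -- countably complete
    intro A hA
    show {α : Omega1 | (⋂ n, A n) ∈ μ α} ∈ ν
    have := hνcc (fun n => {α : Omega1 | A n ∈ μ α}) hA
    exact Filter.mem_of_superset this (fun α hα => hcc α A (fun n => Set.mem_iInter.mp hα n))
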